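/- Let n ≥ 1, d ≥ 1, and let h : ℂⁿ → ℂ be the evaluation of a homogeneous polynomial of degree d in n variables over ℂ which is not identically zero. Then the restriction of h to h⁻¹(ℂ \ {0}) is a locally trivial fibration over ℂ \ {0}: for every w₀ ∈ ℂ with w₀ ≠ 0, there exist an open neighborhood W of w₀ with W ⊆ ℂ \ {0} and a homeomorphism ψ : W × h⁻¹({w₀}) → h⁻¹(W) such that h(ψ(w, z)) = w for all w ∈ W and z ∈ h⁻¹({w₀}). -/

import Mathlib

open MvPolynomial

lemma eval_smul_homog {n d : ℕ} {h : MvPolynomial (Fin n) ℂ} (hh : h.IsHomogeneous d)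
    (c : ℂ) (z : Fin n → ℂ) : eval (c • z) h = c ^ d * eval z h := by
  rw [eval_eq', eval_eq', Finset.mul_sum]
  apply Finset.sum_congr rfl
  intro m hm
  have hdeg : ∑ i, m i = d := by
    have := hh (MvPolynomial.mem_support_iff.mp hm)
    rw [← this]
    simp [Finsupp.weight, Finsupp.linearCombination, Finsupp.sum]
    rw [Finset.sum_subset (Finset.subset_univ m.support)]
    intro x _ hx
    simpa using hx
  calc (coeff m h) * ∏ i, (c • z) i ^ m i
      = coeff m h * (c ^ (∑ i, m i) * ∏ i, z i ^ m i) := by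
        rw [← Finset.prod_pow_eq_pow_sum, ← Finset.prod_mul_distrib]
        simp [mul_pow]
    _ = c ^ d * (coeff m h * ∏ i, z i ^ m i) := by rw [hdeg]; ring



/-- A nonzero homogeneous polynomial `h` of degree `d ≥ 1` on `ℂⁿ` restricts to a
locally trivial fibration `h : h⁻¹(ℂ \ {0}) → ℂ \ {0}`: every `w₀ ≠ 0` has an open
neighborhood `W ⊆ ℂ \ {0}` over which `h` is trivial. -/
theorem homogeneous_polynomial_fibration (n d : ℕ) (hn : 1 ≤ n) (hd : 1 ≤ d)
    (h : MvPolynomial (Fin n) ℂ) (hhom : h.IsHomogeneous d) (hne : h ≠ 0) :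
    ∀ w₀ : ℂ, w₀ ≠ 0 →
      ∃ W : Set ℂ, IsOpen W ∧ w₀ ∈ W ∧ W ⊆ {0}ᶜ ∧
        ∃ ψ : (W × {z : Fin n → ℂ // MvPolynomial.eval z h = w₀}) ≃ₜ
              {z : Fin n → ℂ // MvPolynomial.eval z h ∈ W},
          ∀ (w : W) (z : {z : Fin n → ℂ // MvPolynomial.eval z h = w₀}),
            MvPolynomial.eval ((ψ (w, z) : {z : Fin n → ℂ //
              MvPolynomial.eval z h ∈ W}) : Fin n → ℂ) h = (w : ℂ) := by
  intro w₀ hw₀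
  set W : Set ℂ := Metric.ball w₀ ‖w₀‖ with hW
  have hWopen : IsOpen W := Metric.isOpen_ball
  have hw₀W : w₀ ∈ W := Metric.mem_ball_self (by simpa using hw₀)
  have hWne : ∀ w ∈ W, w ≠ 0 := by
    intro w hw hw0
    subst hw0
    simp [hW, Metric.mem_ball, Complex.dist_eq] at hw
  set c : ℂ → ℂ := fun w => (w / w₀) ^ ((d : ℂ)⁻¹) with hc
  have hd0 : d ≠ 0 := Nat.one_le_iff_ne_zero.mp hd
  have hcpow : ∀ w : ℂ, c w ^ d = w / w₀ := fun w =>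
    Complex.cpow_nat_inv_pow _ hd0
  have hcne : ∀ w ∈ W, c w ≠ 0 := by
    intro w hw
    have hne' : w / w₀ ≠ 0 := div_ne_zero (hWne w hw) hw₀
    simp [hc, Complex.cpow_eq_zero_iff, hne']
  have hcW : ContinuousOn c W := by
    intro w hw
    apply ContinuousAt.continuousWithinAt
    have hslit : w / w₀ ∈ Complex.slitPlane := by
      left
      have h1 : ‖1 - w / w₀‖ < 1 := by
        have : 1 - w / w₀ = (w₀ - w) / w₀ := by field_simp
        rw [this, norm_div]
        rw [div_lt_one (by simpa using hw₀), norm_sub_rev]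
        simpa [hW, Metric.mem_ball, Complex.dist_eq] using hw
      have := (Complex.re_le_norm (1 - w / w₀)).trans_lt h1
      simp only [Complex.sub_re, Complex.one_re] at this
      linarith
    exact ContinuousAt.cpow (continuousAt_id.div_const w₀) continuousAt_const hslit
  -- key evaluation
  have hkey : ∀ (w : ℂ) (z : Fin n → ℂ), eval z h = w₀ →
      eval (c w • z) h = w := by
    intro w z hz
    rw [eval_smul_homog hhom, hz, hcpow, div_mul_cancel₀ _ hw₀]
  refine ⟨W, hWopen, hw₀W, fun w hw => hWne w hw, ?_⟩
  set F := {z : Fin n → ℂ // eval z h = w₀}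
  set E := {z : Fin n → ℂ // eval z h ∈ W}
  have heval : Continuous fun z : Fin n → ℂ => eval z h := MvPolynomial.continuous_eval h
  refine ⟨Homeomorph.mk
    { toFun := fun p => ⟨c p.1 • (p.2 : Fin n → ℂ), by
        rw [hkey p.1 p.2 p.2.2]; exact p.1.2⟩
      invFun := fun z => (⟨eval (z : Fin n → ℂ) h, z.2⟩,
        ⟨(c (eval (z : Fin n → ℂ) h))⁻¹ • (z : Fin n → ℂ), by
          rw [eval_smul_homog hhom, inv_pow, hcpow,
            inv_div, div_mul_cancel₀ _ (hWne _ z.2)]⟩)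
      left_inv := by
        rintro ⟨w, z⟩
        have hev : eval (c w • (z : Fin n → ℂ)) h = w := hkey w z z.2
        ext
        · exact hev
        · simp only [hev, smul_smul, inv_mul_cancel₀ (hcne _ w.2), one_smul]
      right_inv := by
        rintro ⟨z, hz⟩
        ext
        simp only [smul_smul, mul_inv_cancel₀ (hcne _ hz), one_smul]
      } ?_ ?_, ?_⟩
  · -- continuity toFun
    have h1 : Continuous fun p : W × F => c (p.1 : ℂ) :=
      hcW.comp_continuous (continuous_subtype_val.comp continuous_fst) (fun p => p.1.2)
    exact (h1.smul (continuous_subtype_val.comp continuous_snd)).subtype_mk _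
  · -- continuity invFun
    have h2 : Continuous fun z : E => eval (z : Fin n → ℂ) h :=
      heval.comp continuous_subtype_val
    have h3 : Continuous fun z : E => c (eval (z : Fin n → ℂ) h) :=
      hcW.comp_continuous h2 (fun z => z.2)
    have h4 : Continuous fun z : E => (c (eval (z : Fin n → ℂ) h))⁻¹ :=
      h3.inv₀ (fun z => hcne _ z.2)
    exact (h2.subtype_mk _).prodMk ((h4.smul continuous_subtype_val).subtype_mk _)
  · intro w z
    exact hkey w z z.2
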